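/- Adopt the visitation setup: (Ω, ℱ, P) a probability space with filtration (ℱ_t)_{t∈ℕ}, δ ∈ (0,1], for each t a random variable q_t that is ℱ_t-measurable with δ ≤ q_t ≤ 1 almost surely, and an indicator random variable I_t ∈ {0,1} that is ℱ_{t+1}-measurable with E[I_t | ℱ_t] = q_t almost surely; set n_t = ∑_{τ<t} I_τ. Then, almost surely, liminf_{t→∞} n_t/t ≥ δ; in particular, limsup_{t→∞} t/n_t ≤ 1/δ almost surely. -/

import Mathlib

open MeasureTheory Filter Topology
open scoped NNReal ENNReal

lemma sum_inv_sq_le' (n : ℕ) :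
    ∑ i ∈ Finset.range n, (1 : ℝ) / ((i:ℝ)+1)^2 ≤ 2 := by
  have h : ∀ i ∈ Finset.range n, (1:ℝ)/((i:ℝ)+1)^2 ≤
      2*((fun j : ℕ => 1/((j:ℝ)+1)) i - (fun j : ℕ => 1/((j:ℝ)+1)) (i+1)) := by
    intro i _
    have hrhs : 2*((fun j : ℕ => 1/((j:ℝ)+1)) i - (fun j : ℕ => 1/((j:ℝ)+1)) (i+1))
        = 2/(((i:ℝ)+1)*((i:ℝ)+2)) := by
      have h1 : ((i:ℝ)+1) ≠ 0 := by positivity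
      have h2 : ((i:ℝ)+2) ≠ 0 := by positivity
      push_cast
      field_simp
      ring_nf
    rw [hrhs, div_le_div_iff₀ (by positivity) (by positivity)]
    nlinarith [sq_nonneg ((i:ℝ)+1)]
  calc ∑ i ∈ Finset.range n, (1 : ℝ) / ((i:ℝ)+1)^2
      ≤ ∑ i ∈ Finset.range n,
        2*((fun j : ℕ => 1/((j:ℝ)+1)) i - (fun j : ℕ => 1/((j:ℝ)+1)) (i+1)) :=
        Finset.sum_le_sum h
    _ = 2*((fun j : ℕ => 1/((j:ℝ)+1)) 0 - (fun j : ℕ => 1/((j:ℝ)+1)) n) := by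
        rw [← Finset.mul_sum, Finset.sum_range_sub']
    _ ≤ 2 := by
        have : (0:ℝ) ≤ 1/((n:ℝ)+1) := by positivity
        simp only []
        norm_num
        linarith

lemma kronecker_aux (a : ℕ → ℝ) (s : ℝ)
    (h : Tendsto (fun t => ∑ k ∈ Finset.range t, a k / ((k:ℝ)+1)) atTop (𝓝 s)) :
    Tendsto (fun t => (∑ k ∈ Finset.range t, a k) / (t:ℝ)) atTop (𝓝 0) := by
  set S : ℕ → ℝ := fun t => ∑ k ∈ Finset.range t, a k / ((k:ℝ)+1) with hS
  have key : ∀ t : ℕ, ∑ k ∈ Finset.range t, a k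
      = t * S t - ∑ k ∈ Finset.range t, S k := by
    intro t
    induction t with
    | zero => simp [S]
    | succ t ih =>
      have hSt : S (t+1) = S t + a t/((t:ℝ)+1) := by
        simp [S, Finset.sum_range_succ]
      rw [Finset.sum_range_succ, ih, Finset.sum_range_succ (f := S), hSt]
      have h1 : ((t:ℝ)+1) ≠ 0 := by positivity
      push_cast
      field_simp
      ring
  have h2 : Tendsto (fun t : ℕ => ((t:ℝ))⁻¹ * ∑ k ∈ Finset.range t, S k) atTop (𝓝 s) :=
    h.cesaro
  have h3 := h.sub h2
  rw [sub_self] at h3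
  refine h3.congr' ?_
  filter_upwards [eventually_gt_atTop 0] with t ht
  have ht' : ((t:ℝ)) ≠ 0 := by positivity
  rw [key t]
  field_simp

/-- With visit indicators `I t`, conditional visit probabilities `q t ∈ [δ,1]` and visit
counters `n_t = ∑_{τ<t} I_τ`, almost surely `liminf n_t/t ≥ δ`; in particular
`limsup t/n_t ≤ 1/δ` almost surely. -/
theorem visit_fraction_liminf
    {Ω : Type*} {m : MeasurableSpace Ω} {P : Measure Ω} [IsProbabilityMeasure P]
    (ℱ : Filtration ℕ m) (δ : ℝ) (hδ : δ ∈ Set.Ioc (0 : ℝ) 1)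
    (q : ℕ → Ω → ℝ)
    (hq_meas : ∀ t, StronglyMeasurable[ℱ t] (q t))
    (hq_bdd : ∀ t, ∀ᵐ ω ∂P, δ ≤ q t ω ∧ q t ω ≤ 1)
    (I : ℕ → Ω → ℝ)
    (hI01 : ∀ t ω, I t ω = 0 ∨ I t ω = 1)
    (hI_meas : ∀ t, StronglyMeasurable[ℱ (t + 1)] (I t))
    (hIq : ∀ t, P[I t | ℱ t] =ᵐ[P] q t)
    (n : ℕ → Ω → ℕ)
    (hn : ∀ t ω, (n t ω : ℝ) = ∑ τ ∈ Finset.range t, I τ ω) :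
    ∀ᵐ ω ∂P,
      δ ≤ Filter.liminf (fun t : ℕ => (n t ω : ℝ) / t) atTop ∧
      Filter.limsup (fun t : ℕ => (t : ℝ) / (n t ω : ℝ)) atTop ≤ 1 / δ := by
  obtain ⟨hδ0, hδ1⟩ := hδ
  -- the martingale difference scaled by 1/(t+1)
  set d : ℕ → Ω → ℝ := fun t ω => (I t ω - q t ω) / ((t : ℝ) + 1) with hd_def
  set f : ℕ → Ω → ℝ := fun t ω => ∑ τ ∈ Finset.range t, d τ ω with hf_def
  -- integrability of the pieces
  have hI_int : ∀ t, Integrable (I t) P := by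
    intro t
    refine ⟨((hI_meas t).mono (ℱ.le (t + 1))).aestronglyMeasurable, ?_⟩
    refine HasFiniteIntegral.of_bounded (C := 1) (ae_of_all _ fun ω => ?_)
    rcases hI01 t ω with h | h <;> simp [h]
  have hq_int : ∀ t, Integrable (q t) P := by
    intro t
    refine ⟨((hq_meas t).mono (ℱ.le t)).aestronglyMeasurable, ?_⟩
    refine HasFiniteIntegral.of_bounded (C := 1) ?_
    filter_upwards [hq_bdd t] with ω hω
    obtain ⟨h1, h2⟩ := hω
    rw [Real.norm_eq_abs, abs_le]
    constructor <;> nlinarith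
  have hd_int : ∀ t, Integrable (d t) P := fun t =>
    ((hI_int t).sub (hq_int t)).div_const _
  have hf_int : ∀ t, Integrable (f t) P := fun t =>
    integrable_finset_sum _ fun τ _ => hd_int τ
  -- measurability
  have hd_sm : ∀ t, StronglyMeasurable[ℱ (t + 1)] (d t) := by
    intro t
    have h : d t = fun ω => (I t ω - q t ω) * (((t : ℝ) + 1)⁻¹) := by
      funext ω; simp only [hd_def, div_eq_mul_inv]
    rw [h]
    exact ((hI_meas t).sub ((hq_meas t).mono (ℱ.mono (Nat.le_succ t)))).mul
      stronglyMeasurable_const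
  have hd_smm : ∀ t, StronglyMeasurable[m] (d t) := fun t =>
    (hd_sm t).mono (ℱ.le (t + 1))
  have hf_adp : StronglyAdapted ℱ f := by
    intro t
    refine Finset.stronglyMeasurable_fun_sum _ fun τ hτ => ?_
    exact (hd_sm τ).mono (ℱ.mono (Finset.mem_range.1 hτ))
  -- conditional expectation of the differences vanishes
  have hd0 : ∀ t, P[d t|ℱ t] =ᵐ[P] 0 := by
    intro t
    have h1 : d t = (((t : ℝ) + 1)⁻¹) • (I t - q t) := by
      funext ω; simp [hd_def, div_eq_inv_mul]
    rw [h1]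
    have h2 := condExp_smul (μ := P) (m := ℱ t) (((t : ℝ) + 1)⁻¹) (I t - q t)
    refine h2.trans ?_
    have h3 : P[I t - q t|ℱ t] =ᵐ[P] 0 := by
      refine (condExp_sub (hI_int t) (hq_int t) (ℱ t)).trans ?_
      have h4 : P[q t|ℱ t] = q t :=
        condExp_of_stronglyMeasurable (ℱ.le t) (hq_meas t) (hq_int t)
      filter_upwards [hIq t] with ω hω
      simp [h4, hω]
    filter_upwards [h3] with ω hω
    simp [hω]
  -- f is a martingale
  have hmart : Martingale f ℱ P := by
    refine martingale_nat hf_adp hf_int fun t => ?_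
    have hstep : f (t + 1) = f t + d t := by
      funext ω; simp [hf_def, Finset.sum_range_succ]
    rw [hstep]
    have h1 := condExp_add (μ := P) (m := ℱ t) (hf_int t) (hd_int t)
    have h2 : P[f t|ℱ t] = f t :=
      condExp_of_stronglyMeasurable (ℱ.le t) (hf_adp t) (hf_int t)
    filter_upwards [h1, hd0 t] with ω hω h0ω
    simp [hω, h2, h0ω]
  -- a.e. bound on the differences
  have hd_bd : ∀ t, ∀ᵐ ω ∂P, |d t ω| ≤ 1 / ((t : ℝ) + 1) := by
    intro t
    filter_upwards [hq_bdd t] with ω hω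
    obtain ⟨h1, h2⟩ := hω
    have ht1 : (0 : ℝ) < (t : ℝ) + 1 := by positivity
    have hnum : |I t ω - q t ω| ≤ 1 := by
      rcases hI01 t ω with h | h <;> rw [h, abs_le] <;> constructor <;> nlinarith
    calc |d t ω| = |I t ω - q t ω| / ((t : ℝ) + 1) := by
          rw [hd_def]; rw [abs_div, abs_of_pos ht1]
      _ ≤ 1 / ((t : ℝ) + 1) := by
          exact (div_le_div_iff_of_pos_right ht1).2 hnum
  -- products of differences are integrable
  have hdd_int : ∀ i j, Integrable (fun ω => d i ω * d j ω) P := by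
    intro i j
    refine ⟨((hd_smm i).mul (hd_smm j)).aestronglyMeasurable, ?_⟩
    refine HasFiniteIntegral.of_bounded (C := 1) ?_
    filter_upwards [hd_bd i, hd_bd j] with ω h1 h2
    have hi1 : (1 : ℝ) / ((i : ℝ) + 1) ≤ 1 := by
      rw [div_le_one (by positivity)]; linarith [Nat.cast_nonneg (α := ℝ) i]
    have hj1 : (1 : ℝ) / ((j : ℝ) + 1) ≤ 1 := by
      rw [div_le_one (by positivity)]; linarith [Nat.cast_nonneg (α := ℝ) j]
    rw [Real.norm_eq_abs, abs_mul]
    have := mul_le_one₀ (h1.trans hi1) (abs_nonneg _) (h2.trans hj1)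
    exact this
  -- cross terms vanish
  have hcross : ∀ i j, i < j → ∫ ω, d i ω * d j ω ∂P = 0 := by
    intro i j hij
    have hmeas_i : StronglyMeasurable[ℱ j] (d i) := (hd_sm i).mono (ℱ.mono hij)
    have hpull : P[(fun ω => d i ω * d j ω)|ℱ j] =ᵐ[P] fun ω => d i ω * (P[d j|ℱ j]) ω := by
      exact condExp_mul_of_stronglyMeasurable_left hmeas_i (hdd_int i j) (hd_int j)
    have h0 : P[(fun ω => d i ω * d j ω)|ℱ j] =ᵐ[P] 0 := by
      filter_upwards [hpull, hd0 j] with ω h1 h2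
      simp [h1, h2]
    calc ∫ ω, d i ω * d j ω ∂P = ∫ ω, (P[(fun ω => d i ω * d j ω)|ℱ j]) ω ∂P :=
          (integral_condExp (ℱ.le j)).symm
      _ = ∫ ω, (0 : Ω → ℝ) ω ∂P := integral_congr_ae h0
      _ = 0 := by simp
  -- second moment bound
  have hsq_bd : ∀ t, ∫ ω, (f t ω) ^ 2 ∂P ≤ 2 := by
    intro t
    have hexpand : ∀ ω, (f t ω) ^ 2 =
        ∑ i ∈ Finset.range t, ∑ j ∈ Finset.range t, d i ω * d j ω := by
      intro ω
      rw [hf_def]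
      simp only [sq]
      rw [Finset.sum_mul_sum]
    have hint : ∫ ω, (f t ω) ^ 2 ∂P =
        ∑ i ∈ Finset.range t, ∑ j ∈ Finset.range t, ∫ ω, d i ω * d j ω ∂P := by
      rw [integral_congr_ae (ae_of_all _ hexpand)]
      rw [integral_finset_sum _ fun i _ => integrable_finset_sum _ fun j _ => hdd_int i j]
      exact Finset.sum_congr rfl fun i _ => integral_finset_sum _ fun j _ => hdd_int i j
    rw [hint]
    have hdiag : ∀ i ∈ Finset.range t,
        ∑ j ∈ Finset.range t, ∫ ω, d i ω * d j ω ∂P ≤ 1 / ((i : ℝ) + 1) ^ 2 := by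
      intro i hi
      have : ∑ j ∈ Finset.range t, ∫ ω, d i ω * d j ω ∂P = ∫ ω, d i ω * d i ω ∂P := by
        rw [Finset.sum_eq_single i]
        · intro j hj hne
          rcases lt_or_gt_of_ne hne with h | h
          · have := hcross j i h
            rw [← this]
            exact integral_congr_ae (ae_of_all _ fun ω => mul_comm _ _)
          · exact hcross i j h
        · intro h; exact absurd hi h
      rw [this]
      have hmono : ∫ ω, d i ω * d i ω ∂P ≤ ∫ ω, (1 / ((i : ℝ) + 1) ^ 2 : ℝ) ∂P := by
        refine integral_mono_ae (hdd_int i i) (integrable_const _) ?_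
        filter_upwards [hd_bd i] with ω hω
        have : d i ω * d i ω = |d i ω| ^ 2 := by
          rw [sq_abs]; ring
        rw [this, one_div, ← inv_pow, ← one_div]
        exact pow_le_pow_left₀ (abs_nonneg _) hω 2
      simpa using hmono
    calc ∑ i ∈ Finset.range t, ∑ j ∈ Finset.range t, ∫ ω, d i ω * d j ω ∂P
        ≤ ∑ i ∈ Finset.range t, 1 / ((i : ℝ) + 1) ^ 2 := Finset.sum_le_sum hdiag
      _ ≤ 2 := sum_inv_sq_le' t
  have hexpand : ∀ t ω, (f t ω) ^ 2 =
      ∑ i ∈ Finset.range t, ∑ j ∈ Finset.range t, d i ω * d j ω := by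
    intro t ω
    rw [hf_def]
    simp only [sq]
    rw [Finset.sum_mul_sum]
  have hfsq_int : ∀ t, Integrable (fun ω => (f t ω) ^ 2) P := by
    intro t
    have h : Integrable
        (fun ω => ∑ i ∈ Finset.range t, ∑ j ∈ Finset.range t, d i ω * d j ω) P :=
      integrable_finset_sum _ fun i _ => integrable_finset_sum _ fun j _ => hdd_int i j
    exact h.congr (ae_of_all _ fun ω => (hexpand t ω).symm)
  -- L¹ bound
  have hL1 : ∀ t, ∫ ω, |f t ω| ∂P ≤ 2 := by
    intro t
    have h1 : ∫ ω, |f t ω| ∂P ≤ ∫ ω, ((f t ω) ^ 2 + 1) / 2 ∂P := by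
      refine integral_mono_ae (hf_int t).abs ?_ (ae_of_all _ fun ω => ?_)
      · exact ((hfsq_int t).add (integrable_const 1)).div_const 2
      · nlinarith [sq_nonneg (|f t ω| - 1), sq_abs (f t ω)]
    have h2 : ∫ ω, ((f t ω) ^ 2 + 1) / 2 ∂P = ((∫ ω, (f t ω) ^ 2 ∂P) + 1) / 2 := by
      rw [integral_div, integral_add (hfsq_int t) (integrable_const 1)]
      simp
    rw [h2] at h1
    have := hsq_bd t
    linarith
  have hbdd : ∀ t, eLpNorm (f t) 1 P ≤ (2 : ℝ≥0) := by
    intro t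
    rw [eLpNorm_one_eq_lintegral_enorm,
      ← ofReal_integral_norm_eq_lintegral_enorm (hf_int t)]
    have h2 : ((2 : ℝ≥0) : ℝ≥0∞) = ENNReal.ofReal 2 := by simp
    rw [h2]
    refine ENNReal.ofReal_le_ofReal ?_
    simpa [Real.norm_eq_abs] using hL1 t
  have hconv := hmart.submartingale.exists_ae_tendsto_of_bdd hbdd
  -- conclusion, pointwise a.e.
  filter_upwards [hconv, ae_all_iff.2 hq_bdd] with ω hcω hqω
  obtain ⟨c, hc⟩ := hcω
  -- Kronecker
  have hz : Tendsto (fun t => (∑ k ∈ Finset.range t, (I k ω - q k ω)) / (t : ℝ))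
      atTop (𝓝 0) := by
    refine kronecker_aux (fun k => I k ω - q k ω) c ?_
    exact hc.congr fun t => rfl
  -- decomposition of n t / t
  have hdecomp : ∀ t : ℕ, 1 ≤ t → ((n t ω : ℝ) / t) =
      (∑ k ∈ Finset.range t, (I k ω - q k ω)) / (t : ℝ)
        + (∑ k ∈ Finset.range t, q k ω) / (t : ℝ) := by
    intro t ht
    rw [hn t ω, ← add_div]
    congr 1
    rw [← Finset.sum_add_distrib]
    exact Finset.sum_congr rfl fun k _ => by ring
  have hqsum : ∀ t : ℕ, 1 ≤ t → δ ≤ (∑ k ∈ Finset.range t, q k ω) / (t : ℝ) := by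
    intro t ht
    have htpos : (0 : ℝ) < t := by exact_mod_cast ht
    rw [le_div_iff₀ htpos]
    calc δ * t = ∑ _k ∈ Finset.range t, δ := by
          rw [Finset.sum_const, Finset.card_range]; ring
      _ ≤ ∑ k ∈ Finset.range t, q k ω := Finset.sum_le_sum fun k _ => (hqω k).1
  -- eventual lower bound on n t / t
  have hev : ∀ ε : ℝ, 0 < ε → ∀ᶠ t : ℕ in atTop, δ - ε ≤ (n t ω : ℝ) / t := by
    intro ε hε
    have h1 := hz.eventually (eventually_abs_sub_lt 0 hε)
    filter_upwards [h1, eventually_ge_atTop 1] with t h1t h1t'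
    rw [hdecomp t h1t']
    have h2 : -(ε) < (∑ k ∈ Finset.range t, (I k ω - q k ω)) / (t : ℝ) := by
      rw [sub_zero] at h1t
      have := abs_lt.1 h1t
      linarith [this.1]
    linarith [hqsum t h1t']
  have hub : ∀ t : ℕ, (n t ω : ℝ) / t ≤ 1 := by
    intro t
    have hsum : (n t ω : ℝ) ≤ t := by
      rw [hn t ω]
      calc ∑ k ∈ Finset.range t, I k ω ≤ ∑ _k ∈ Finset.range t, (1 : ℝ) :=
            Finset.sum_le_sum fun k _ => by rcases hI01 k ω with h | h <;> simp [h]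
        _ = t := by simp
    rcases Nat.eq_zero_or_pos t with h0 | hpos
    · subst h0; simp
    · have htpos : (0 : ℝ) < t := by exact_mod_cast hpos
      rw [div_le_one htpos]; exact hsum
  -- liminf bound
  have hliminf : δ ≤ Filter.liminf (fun t : ℕ => (n t ω : ℝ) / t) atTop := by
    refine le_of_forall_pos_le_add fun ε hε => ?_
    have h := le_liminf_of_le (isCoboundedUnder_ge_of_le atTop hub) (hev ε hε)
    linarith [h]
  refine ⟨hliminf, ?_⟩
  -- limsup bound
  refine le_of_forall_gt_imp_ge_of_dense fun b hb => ?_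
  have hbpos : (0 : ℝ) < b := lt_trans (by positivity) hb
  have hinvb : 1 / b < δ := by
    rw [div_lt_iff₀ hbpos]
    rw [div_lt_iff₀ hδ0] at hb
    nlinarith
  have hεpos : 0 < δ - 1 / b := by linarith
  have hevb : ∀ᶠ t : ℕ in atTop, (t : ℝ) / (n t ω : ℝ) ≤ b := by
    filter_upwards [hev (δ - 1 / b) hεpos, eventually_ge_atTop 1] with t h1 h2
    have h3 : (1 : ℝ) / b ≤ (n t ω : ℝ) / t := by linarith
    have htpos : (0 : ℝ) < t := by exact_mod_cast h2
    have hnpos : (0 : ℝ) < (n t ω : ℝ) := by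
      by_contra h
      push_neg at h
      have : (n t ω : ℝ) / t ≤ 0 := div_nonpos_of_nonpos_of_nonneg h htpos.le
      nlinarith [one_div_pos.2 hbpos]
    calc (t : ℝ) / (n t ω : ℝ) = 1 / ((n t ω : ℝ) / t) := by
          rw [one_div_div]
      _ ≤ 1 / (1 / b) := by
          exact one_div_le_one_div_of_le (by positivity) h3
      _ = b := one_div_one_div b
  exact limsup_le_of_le
    (isCoboundedUnder_le_of_le atTop fun t => by positivity) hevb
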